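/- arXiv:math/0703866 — 3 statements merged into one kernel-verified Lean document; each statement's English description precedes it below -/
import Mathlib

section
/- Let M ≥ 1 and l > M be integers, and let b : Fin n → ℕ be given by b_0 = M and b_i = b_{i-1} + a_i with 0 ≤ a_i ≤ M for i = 1,…,n−1. Then there is no index j such that the sequence obtained from b by replacing b_j with b_j − l is still a valid interlacing sequence, i.e. satisfies 0 ≤ b̃_0 ≤ b_0 ≤ b̃_1 ≤ b_1 ≤ … ≤ b̃_{n-1} ≤ b_{n-1}. (Subtracting l from b_0 gives a negative entry, and subtracting l from b_i with i ≥ 1 gives b_i − l < b_{i-1}.) -/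
/-- `bt` interlaces `b` (on indices `0, …, n-1`):
`0 ≤ bt 0 ≤ b 0 ≤ bt 1 ≤ b 1 ≤ … ≤ bt (n-1) ≤ b (n-1)`. -/
def Interlaces (n : ℕ) (bt b : ℕ → ℤ) : Prop :=
  0 ≤ bt 0 ∧ (∀ i < n, bt i ≤ b i) ∧ (∀ i, i + 1 < n → b i ≤ bt (i + 1))

/- STATEMENT 6: if b_0 = M, b_i = b_{i-1} + a_i with 0 ≤ a_i ≤ M, and l > M,
then subtracting l from any single entry b_j never yields an interlacing
sequence. -/
theorem stmt6 (n M l : ℕ) (hn : 1 ≤ n) (hM : 1 ≤ M) (hl : M < l)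
    (b : ℕ → ℤ) (hb0 : b 0 = (M : ℤ))
    (hstep : ∀ i, 1 ≤ i → i < n →
      0 ≤ b i - b (i - 1) ∧ b i - b (i - 1) ≤ (M : ℤ)) :
    ¬ ∃ j < n, Interlaces n (fun i => if i = j then b i - (l : ℤ) else b i) b := by
  rintro ⟨j, hj, h0, _, h2⟩
  rcases Nat.eq_zero_or_pos j with rfl | hj1
  · simp [hb0] at h0
    omega
  · have h3 := h2 (j - 1) (by omega)
    have hjj : j - 1 + 1 = j := by omega
    rw [hjj] at h3
    simp only [show j = j ↔ True from by simp, if_true] at h3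
    have h4 := (hstep j hj1 hj).2
    omega
end

section
/- Let n ≥ 1 and let b_0 ≤ b_1 ≤ … ≤ b_{n-1} be integers, and let b̃ interlace b (meaning b̃_0 ≤ b_0 ≤ b̃_1 ≤ b_1 ≤ … ≤ b̃_{n-1} ≤ b_{n-1}). Suppose there exist two indices i < j with b̃_i < b_i and b̃_j < b_j, and suppose further that as multisets {c} ∪ {b_m + m + 2 : b̃_m ≠ b_m} = {c + l} ∪ {b̃_m + m + 2 : b̃_m ≠ b_m} for some integers c and l > 0, where l = Σ(b_m − b̃_m). Then a contradiction follows; hence if the two multisets are equal, b̃ differs from b in at most one entry. -/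
open Finset

/- STATEMENT 7: the key combinatorial step of Proposition 2.
If b̃ interlaces b, b̃ differs from b in at least two entries i < j, and the
ρ-shifted multisets {c} ∪ {b_m + m + 2 : b̃_m ≠ b_m} and
{c + l} ∪ {b̃_m + m + 2 : b̃_m ≠ b_m} agree, where l = Σ (b_m − b̃_m) > 0,
then a contradiction follows. -/
theorem stmt7 (n : ℕ) (hn : 1 ≤ n) (b bt : ℕ → ℤ)
    (hmono : ∀ i, i + 1 < n → b i ≤ b (i + 1))
    (hle : ∀ i < n, bt i ≤ b i)
    (hint : ∀ i, i + 1 < n → b i ≤ bt (i + 1))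
    (i j : ℕ) (hij : i < j) (hjn : j < n) (hi : bt i < b i) (hj : bt j < b j)
    (c l : ℤ) (hl : 0 < l)
    (hlsum : l = ∑ m ∈ Finset.range n, (b m - bt m))
    (hms : ({c} : Multiset ℤ) +
        ((Finset.range n).filter (fun m => bt m ≠ b m)).val.map
          (fun m => b m + (m : ℤ) + 2)
      = ({c + l} : Multiset ℤ) +
        ((Finset.range n).filter (fun m => bt m ≠ b m)).val.map
          (fun m => bt m + (m : ℤ) + 2)) :
    False := by
  have hmono' : ∀ t, t < n → ∀ s ≤ t, b s ≤ b t := by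
    intro t
    induction t with
    | zero => intro _ s hs; interval_cases s; exact le_refl _
    | succ t ih =>
      intro htn s hs
      rcases Nat.eq_or_lt_of_le hs with h | h
      · rw [h]
      · exact (ih (Nat.lt_of_succ_lt htn) s (Nat.lt_succ_iff.mp h)).trans (hmono t htn)
  have key : ∀ t, t < n → bt t < b t → b t + (t : ℤ) + 2 = c + l := by
    intro t htn hbt
    have hmem : (b t + (t : ℤ) + 2) ∈ ({c} : Multiset ℤ) +
        ((Finset.range n).filter (fun m => bt m ≠ b m)).val.map
          (fun m => b m + (m : ℤ) + 2) := by
      rw [Multiset.mem_add]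
      right
      rw [Multiset.mem_map]
      exact ⟨t, Finset.mem_val.mpr (Finset.mem_filter.mpr ⟨Finset.mem_range.mpr htn, ne_of_lt hbt⟩), rfl⟩
    rw [hms, Multiset.mem_add] at hmem
    rcases hmem with h | h
    · exact Multiset.mem_singleton.mp h
    · exfalso
      obtain ⟨s, hs, heq⟩ := Multiset.mem_map.mp h
      have hs' := Finset.mem_filter.mp (Finset.mem_val.mp hs)
      have hsn : s < n := Finset.mem_range.mp hs'.1
      have hsne : bt s ≠ b s := hs'.2
      have hsle : bt s ≤ b s := hle s hsn
      rcases lt_trichotomy s t with hst | hst | hst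
      · have := hmono' t htn s (Nat.le_of_lt hst)
        omega
      · subst hst; omega
      · obtain ⟨u, rfl⟩ : ∃ u, s = u + 1 := ⟨s - 1, by omega⟩
        have h1 : b u ≤ bt (u + 1) := hint u hsn
        have h2 : b t ≤ b u := hmono' u (by omega) t (by omega)
        omega
  have h1 := key i (Nat.lt_trans hij hjn) hi
  have h2 := key j hjn hj
  have h3 := hmono' j hjn i (Nat.le_of_lt hij)
  omega
end

section
/- With notation as above, set ω = −(1/(n+1))(nk + Σ_{i=1}^{n-1}(n−i) a_i), λ_{n−j} = a_1 + ⋯ + a_j for 1 ≤ j ≤ n−1 (and λ_m determined by λ_m − λ_{m+1} = a_{n−m}, λ_n = 0), α = −L_n, |α|² = (n−1)/(n+1), and ρ = Σ_{i=1}^{n-1}(n−i)L_i. Then the equation ω = (α + L_{n−j}, ρ) − (1/2)(l−1)(|α|² + 1) + (L_{n−j}, λ̃) holds if and only if k = −(a_1 + ⋯ + a_j + j − l + 1). -/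
open Finset

lemma swap_sum (n : ℕ) (a : ℕ → ℕ) :
    ∑ m ∈ Finset.Icc 1 n, ∑ i ∈ Finset.Icc 1 (n - m), a i
      = ∑ i ∈ Finset.Icc 1 (n - 1), (n - i) * a i := by
  have h1 : ∀ m ∈ Finset.Icc 1 n, ∑ i ∈ Finset.Icc 1 (n - m), a i
      = ∑ i ∈ Finset.Icc 1 n, if i ≤ n - m then a i else 0 := by
    intro m hm
    rw [← Finset.sum_filter]
    refine (Finset.sum_congr ?_ fun _ _ => rfl)
    ext x
    simp only [Finset.mem_Icc, Finset.mem_filter]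
    omega
  rw [Finset.sum_congr rfl h1, Finset.sum_comm]
  have h2 : ∀ i ∈ Finset.Icc 1 n, (∑ m ∈ Finset.Icc 1 n, if i ≤ n - m then a i else 0)
      = (n - i) * a i := by
    intro i hi
    simp only [Finset.mem_Icc] at hi
    have h3 : ∀ m ∈ Finset.Icc 1 n, (if i ≤ n - m then a i else 0)
        = (if m ≤ n - i then a i else 0) := by
      intro m hm
      simp only [Finset.mem_Icc] at hm
      congr 1
      simp only [eq_iff_iff]
      omega
    rw [Finset.sum_congr rfl h3, ← Finset.sum_filter]
    have hf : (Finset.Icc 1 n).filter (· ≤ n - i) = Finset.Icc 1 (n - i) := by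
      ext x
      simp only [Finset.mem_Icc, Finset.mem_filter]
      omega
    rw [hf, Finset.sum_const, Nat.card_Icc, smul_eq_mul]
    congr 1
  rw [Finset.sum_congr rfl h2]
  refine (Finset.sum_subset (Finset.Icc_subset_Icc_right (Nat.sub_le n 1)) ?_).symm
  intro i hi hni
  simp only [Finset.mem_Icc] at hi hni
  have : i = n := by omega
  subst this
  simp

/- STATEMENT 10: the geometric-weight condition of Proposition 3.
Coefficient vectors in (h^S)* = ℂ⟨L_1,…,L_n⟩/(ΣL_i = 0) as in Statement 9;
the descended normalized Killing form has Gram matrix (n·δ_ij − 1)/(n+1),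
so that |α|² = (n−1)/(n+1) for α = −L_n.  λ is determined by
λ_m − λ_{m+1} = a_{n−m}, λ_n = 0, i.e. λ_m = a_1 + ⋯ + a_{n−m}. -/
theorem stmt10 (n : ℕ) (hn : 1 ≤ n) (a : ℕ → ℕ)
    (j l : ℕ) (hj : j ≤ n - 1) (hl : 1 ≤ l) (k : ℤ) :
    let B : (ℕ → ℝ) → (ℕ → ℝ) → ℝ := fun x y =>
      ∑ i ∈ Finset.Icc 1 n, ∑ m ∈ Finset.Icc 1 n,
        x i * y m * (((n : ℝ) * (if i = m then 1 else 0) - 1) / ((n : ℝ) + 1));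
    let L : ℕ → ℕ → ℝ := fun m i => if i = m then 1 else 0;
    let α : ℕ → ℝ := fun i => if i = n then -1 else 0;
    let ρ : ℕ → ℝ := fun i => (n : ℝ) - (i : ℝ);
    let lam : ℕ → ℝ := fun m => ∑ i ∈ Finset.Icc 1 (n - m), (a i : ℝ);
    let ω : ℝ := -(1 / ((n : ℝ) + 1)) *
      ((n : ℝ) * (k : ℝ) + ∑ i ∈ Finset.Icc 1 (n - 1), ((n : ℝ) - (i : ℝ)) * (a i : ℝ));
    (ω = B (fun i => α i + L (n - j) i) ρ
        - (1/2) * ((l : ℝ) - 1) * (B α α + 1) + B (L (n - j)) lam)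
    ↔ k = -((∑ i ∈ Finset.Icc 1 j, (a i : ℤ)) + (j : ℤ) - (l : ℤ) + 1) := by
  intro B L α ρ lam ω
  have hjn : j ≤ n := le_trans hj (Nat.sub_le n 1)
  have hne : (n : ℝ) + 1 ≠ 0 := by positivity
  have hn0 : (n : ℝ) ≠ 0 := by
    have : (0:ℝ) < n := by exact_mod_cast hn
    linarith
  have hnmem : n ∈ Finset.Icc 1 n := by simp [Finset.mem_Icc]; omega
  have hpmem : n - j ∈ Finset.Icc 1 n := by simp [Finset.mem_Icc]; omega
  -- generic value of B on an indicator in the first slot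
  have hB1 : ∀ (p : ℕ), p ∈ Finset.Icc 1 n → ∀ (y : ℕ → ℝ),
      B (fun i => if i = p then 1 else 0) y
        = ((n:ℝ) * y p - ∑ m ∈ Finset.Icc 1 n, y m) / ((n:ℝ)+1) := by
    intro p hp y
    simp only [B]
    rw [Finset.sum_eq_single p]
    · have hcg : ∀ m ∈ Finset.Icc 1 n,
          (if p = p then (1:ℝ) else 0) * y m
              * (((n:ℝ) * (if p = m then 1 else 0) - 1)/((n:ℝ)+1))
          = ((n:ℝ)/((n:ℝ)+1)) * (if p = m then y m else 0) - y m * (1/((n:ℝ)+1)) := by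
        intro m _
        rw [if_pos rfl, one_mul]
        split_ifs with h <;> (field_simp; try ring)
      rw [Finset.sum_congr rfl hcg, Finset.sum_sub_distrib, ← Finset.mul_sum,
          Finset.sum_ite_eq, if_pos hp, ← Finset.sum_mul]
      field_simp
      try ring
    · intro b _ hb
      simp [if_neg hb]
    · intro h
      exact absurd hp h
  have hL : ∀ y : ℕ → ℝ, B (L (n - j)) y
      = ((n:ℝ) * y (n - j) - ∑ m ∈ Finset.Icc 1 n, y m) / ((n:ℝ)+1) :=
    fun y => hB1 (n - j) hpmem y
  have hαy : ∀ y : ℕ → ℝ, B α y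
      = -(((n:ℝ) * y n - ∑ m ∈ Finset.Icc 1 n, y m) / ((n:ℝ)+1)) := by
    intro y
    have h2 : B α y = -(B (fun i => if i = n then (1:ℝ) else 0) y) := by
      simp only [B, α, ← Finset.sum_neg_distrib]
      refine Finset.sum_congr rfl fun i _ => Finset.sum_congr rfl fun m _ => ?_
      split_ifs <;> ring
    rw [h2, hB1 n hnmem y]
  have hadd : B (fun i => α i + L (n - j) i) ρ = B α ρ + B (L (n - j)) ρ := by
    simp only [B, add_mul, Finset.sum_add_distrib]
  have hαn : α n = -1 := by simp [α]
  have hSα : ∑ m ∈ Finset.Icc 1 n, α m = -1 := by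
    simp only [α]
    rw [Finset.sum_ite_eq' (Finset.Icc 1 n) n (fun _ => (-1:ℝ)), if_pos hnmem]
  have hBaa : B α α = ((n:ℝ) - 1)/((n:ℝ)+1) := by
    rw [hαy α, hαn, hSα]
    field_simp
    ring
  have hρn : ρ n = 0 := by simp [ρ]
  have hρp : ρ (n - j) = (j : ℝ) := by
    simp only [ρ]
    rw [Nat.cast_sub hjn]
    ring
  have hlamp : lam (n - j) = ∑ i ∈ Finset.Icc 1 j, (a i : ℝ) := by
    simp only [lam, Nat.sub_sub_self hjn]
  have hSlam : ∑ m ∈ Finset.Icc 1 n, lam m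
      = ∑ i ∈ Finset.Icc 1 (n-1), ((n:ℝ) - (i:ℝ)) * (a i:ℝ) := by
    simp only [lam]
    rw [show (∑ m ∈ Finset.Icc 1 n, ∑ i ∈ Finset.Icc 1 (n-m), (a i:ℝ))
        = ((∑ m ∈ Finset.Icc 1 n, ∑ i ∈ Finset.Icc 1 (n-m), a i : ℕ) : ℝ) by
      push_cast; rfl]
    rw [swap_sum n a]
    push_cast
    refine Finset.sum_congr rfl fun i hi => ?_
    simp only [Finset.mem_Icc] at hi
    rw [Nat.cast_sub (by omega : i ≤ n)]
  rw [hadd, hαy ρ, hL ρ, hBaa, hL lam, hρn, hρp, hlamp, hSlam]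
  simp only [ω]
  constructor
  · intro h
    field_simp at h
    have h3 : (2*((n:ℝ)+1)^3) * ((n:ℝ)*(k:ℝ)
        + (n:ℝ)*((∑ i ∈ Finset.Icc 1 j, (a i:ℝ)) + (j:ℝ) - (l:ℝ) + 1)) = 0 := by
      linear_combination -((n:ℝ)+1)^3 * h
    have h4 : (n:ℝ)*(k:ℝ)
        + (n:ℝ)*((∑ i ∈ Finset.Icc 1 j, (a i:ℝ)) + (j:ℝ) - (l:ℝ) + 1) = 0 := by
      rcases mul_eq_zero.1 h3 with h5 | h5
      · exact absurd h5 (by positivity)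
      · exact h5
    have h' : (n:ℝ) * (k:ℝ)
        = (n:ℝ) * (-((∑ i ∈ Finset.Icc 1 j, (a i : ℝ)) + (j:ℝ) - (l:ℝ) + 1)) := by
      linear_combination h4
    have h2 := mul_left_cancel₀ hn0 h'
    have h3 : (k:ℝ) = ((-((∑ i ∈ Finset.Icc 1 j, (a i : ℤ)) + (j : ℤ) - (l : ℤ) + 1) : ℤ) : ℝ) := by
      rw [h2]; push_cast; ring
    exact_mod_cast h3
  · intro h
    have hk : (k:ℝ) = -((∑ i ∈ Finset.Icc 1 j, (a i : ℝ)) + (j:ℝ) - (l:ℝ) + 1) := by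
      have := congrArg (Int.cast : ℤ → ℝ) h
      push_cast at this
      exact this
    rw [hk]
    field_simp
    ring
end
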